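/- arXiv:1901.00185 — 2 statements merged into one kernel-verified Lean document; each statement's English description precedes it below -/
import Mathlib

section
/- Let P be a two-color grid poset with the max property, L := J_color(P), t ∈ L with t ≠ max, and γ := κ(t). If s ∈ comp_γ(t) with v(t) ∉ s (note that then s ≠ max), then κ(s) = γ. -/
open scoped Classical

structure GridData (P : Type) [PartialOrder P] where
  m : ℕ
  chain : P → ℕ
  color : P → Fin 2

def IsIdeal {P : Type} [PartialOrder P] (t : Finset P) : Prop :=
  ∀ ⦃x⦄, x ∈ t → ∀ ⦃y⦄, y ≤ x → y ∈ t

namespace GridData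

variable {P : Type} [PartialOrder P] [Fintype P]

/-- The defining properties of a grid poset. -/
def IsGridPoset (G : GridData P) : Prop :=
  1 ≤ G.m ∧
  (∀ u : P, G.chain u ∈ Finset.Icc 1 G.m) ∧
  (∀ i ∈ Finset.Icc 1 G.m, ∃ u : P, G.chain u = i) ∧
  (∀ u v : P, G.chain u = G.chain v → u ≤ v ∨ v ≤ u) ∧
  (∀ u v : P, u ⋖ v → G.chain u = G.chain v ∨ G.chain u = G.chain v + 1)

/-- The defining properties of a two-color grid poset. -/
def IsTwoColorGridPoset (G : GridData P) : Prop :=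
  G.IsGridPoset ∧
  (∀ u v : P, G.chain u = G.chain v → G.color u = G.color v) ∧
  (∀ u v : P, Relation.ReflTransGen (fun x y : P => x ⋖ y ∨ y ⋖ x) u v →
    G.chain u = G.chain v + 1 → G.color u ≠ G.color v)

/-- The max property. -/
def MaxProperty (G : GridData P) : Prop :=
  (∀ u : P, IsMax u → G.chain u ≤ 2) ∧
  (∀ u v : P, IsMax u → IsMax v → u ≠ v → G.color u ≠ G.color v)

/-- The fiber `C i` of the chain function. -/
def fiber (G : GridData P) (i : ℕ) : Finset P :=
  Finset.univ.filter (fun u => G.chain u = i)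

/-- One step in a `γ`-component of `J_color(P)`: add or remove a single vertex of
color `γ` while both sets are order ideals. -/
def GStep (G : GridData P) (γ : Fin 2) (s t : Finset P) : Prop :=
  IsIdeal s ∧ IsIdeal t ∧ ∃ u : P, G.color u = γ ∧
    ((u ∉ s ∧ t = insert u s) ∨ (u ∉ t ∧ s = insert u t))

/-- The `γ`-component of `t` in `J_color(P)`. -/
def comp (G : GridData P) (γ : Fin 2) (t : Finset P) : Set (Finset P) :=
  {s | Relation.ReflTransGen (G.GStep γ) t s}

noncomputable def minCard (G : GridData P) (γ : Fin 2) (t : Finset P) : ℕ :=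
  sInf (Finset.card '' G.comp γ t)

noncomputable def maxCard (G : GridData P) (γ : Fin 2) (t : Finset P) : ℕ :=
  sSup (Finset.card '' G.comp γ t)

/-- `m_γ(t) = 2 ρ_γ(t) - l_γ(t)`. -/
noncomputable def mcoord (G : GridData P) (γ : Fin 2) (t : Finset P) : ℤ :=
  2 * ((t.card : ℤ) - (G.minCard γ t : ℤ)) - ((G.maxCard γ t : ℤ) - (G.minCard γ t : ℤ))

/-- The weight of an element of `J_color(P)` (color `0` is α, color `1` is β). -/
noncomputable def wt (G : GridData P) (t : Finset P) : Fin 2 → ℤ :=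
  ![G.mcoord 0 t, G.mcoord 1 t]

/-- `J_color(P)` is `M`-structured. -/
def MStructured (G : GridData P) (M : Matrix (Fin 2) (Fin 2) ℤ) : Prop :=
  ∀ s t : Finset P, IsIdeal s → IsIdeal t → ∀ u : P, u ∉ s → t = insert u s →
    G.wt s + M (G.color u) = G.wt t

end GridData

namespace GridData

variable {P : Type} [PartialOrder P] [Fintype P]

/-- The indices `i ∈ {1,…,m}` of the fibers whose vertices have color `γ`. -/
def colorIdx (G : GridData P) (γ : Fin 2) : Finset ℕ :=
  (Finset.Icc 1 G.m).filter (fun i => ∃ u : P, G.chain u = i ∧ G.color u = γ)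

/-- `I_j`: the largest subset `I` of the fiber `C i` such that both `t ∪ I` and
`t \ I` are order ideals (realized as the union of all such subsets). -/
noncomputable def Imax (G : GridData P) (t : Finset P) (i : ℕ) : Finset P :=
  (G.fiber i).filter (fun x =>
    ∃ J ⊆ G.fiber i, x ∈ J ∧ IsIdeal (t ∪ J) ∧ IsIdeal (t \ J))

/-- The largest index `k ∈ {1,…,m}` such that the fiber `C k` is not contained in `t`. -/
noncomputable def kIdx (G : GridData P) (t : Finset P) : ℕ :=
  sSup {i | i ∈ Finset.Icc 1 G.m ∧ ¬ G.fiber i ⊆ t}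

/-- `z_i`, the maximal element of the (chain) fiber `C i`. -/
noncomputable def zEl [Nonempty P] (G : GridData P) (i : ℕ) : P :=
  if h : ∃ z ∈ G.fiber i, ∀ w ∈ G.fiber i, w ≤ z then h.choose else Classical.arbitrary P

/-- `v(t) := z_k` where `k` is the largest index with `C_k ⊄ t`. -/
noncomputable def vOf [Nonempty P] (G : GridData P) (t : Finset P) : P :=
  G.zEl (G.kIdx t)

/-- The vertex-coloring function `κ(t) := color(v(t))`. -/
noncomputable def kOf [Nonempty P] (G : GridData P) (t : Finset P) : Fin 2 :=
  G.color (G.vOf t)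

/-- A face of `comp_γ(t)` with respect to the isomorphism
`φ(s) = (s ∩ I_1, …, s ∩ I_k)`: for some color-`γ` fiber index `q`, the set of
elements of `comp_γ(t)` whose `q`-th coordinate `s ∩ I_q` is the maximal element
`I_q` of the chain `J(I_q)`. -/
def IsFace (G : GridData P) (γ : Fin 2) (t : Finset P) (S : Set (Finset P)) : Prop :=
  ∃ q ∈ G.colorIdx γ, S = {s | s ∈ G.comp γ t ∧ G.Imax t q ⊆ s}

/-- A sub-face of `comp_γ(t)`: the complement (within `comp_γ(t)`) of a face. -/
def IsSubFace (G : GridData P) (γ : Fin 2) (t : Finset P) (S : Set (Finset P)) : Prop :=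
  ∃ q ∈ G.colorIdx γ, S = {s | s ∈ G.comp γ t ∧ ¬ G.Imax t q ⊆ s}

end GridData

section Aux

variable {P : Type} [PartialOrder P] [Fintype P]

/-- Only vertices of color `γ` can differ between `t` and an element of `comp γ t`. -/
lemma comp_mem_iff_of_ne_color (G : GridData P) (γ : Fin 2) {t s : Finset P}
    (hs : s ∈ G.comp γ t) {u : P} (hu : G.color u ≠ γ) : u ∈ t ↔ u ∈ s := by
  induction hs with
  | refl => rfl
  | tail _ hstep ih =>
    rename_i b c _
    obtain ⟨_, _, w, hwγ, hcase⟩ := hstep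
    have hne : u ≠ w := by rintro rfl; exact hu hwγ
    rcases hcase with ⟨hw, rfl⟩ | ⟨hw, rfl⟩
    · rw [ih, Finset.mem_insert]
      exact ⟨Or.inr, fun h => h.resolve_left hne⟩
    · rw [ih, Finset.mem_insert]
      exact ⟨fun h => h.resolve_left hne, Or.inr⟩

lemma fiber_mem_iff (G : GridData P) {i : ℕ} {x : P} :
    x ∈ G.fiber i ↔ G.chain x = i := by
  simp [GridData.fiber]

/-- A nonempty fiber of a grid poset has a top element. -/
lemma fiber_exists_top (G : GridData P) (hG : G.IsGridPoset) {i : ℕ}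
    (hne : (G.fiber i).Nonempty) : ∃ z ∈ G.fiber i, ∀ w ∈ G.fiber i, w ≤ z := by
  obtain ⟨z, hz, hzmax⟩ : ∃ z ∈ G.fiber i, ∀ x ∈ G.fiber i, ¬ z < x := by
    obtain ⟨z, hz⟩ := Finset.exists_maximal hne
    exact ⟨z, hz.prop, fun x hx hlt => hlt.ne (hz.eq_of_le hx hlt.le)⟩
  refine ⟨z, hz, fun w hw => ?_⟩
  have hcomp := hG.2.2.2.1 w z
    (by rw [fiber_mem_iff] at hz hw; rw [hz, hw])
  rcases hcomp with h | h
  · exact h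
  · rcases eq_or_lt_of_le h with h' | h'
    · exact h'.ge
    · exact absurd h' (hzmax w hw)

lemma zEl_mem (G : GridData P) [Nonempty P] (hG : G.IsGridPoset) {i : ℕ}
    (hne : (G.fiber i).Nonempty) : G.zEl i ∈ G.fiber i ∧ ∀ w ∈ G.fiber i, w ≤ G.zEl i := by
  have h : ∃ z ∈ G.fiber i, ∀ w ∈ G.fiber i, w ≤ z := fiber_exists_top G hG hne
  rw [GridData.zEl, dif_pos h]
  exact ⟨h.choose_spec.1, h.choose_spec.2⟩

lemma bddAbove_K (G : GridData P) (t : Finset P) :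
    BddAbove {i | i ∈ Finset.Icc 1 G.m ∧ ¬ G.fiber i ⊆ t} :=
  ⟨G.m, fun i hi => (Finset.mem_Icc.mp hi.1).2⟩

lemma K_nonempty' (G : GridData P) (hG : G.IsGridPoset) {t : Finset P}
    (htop : t ≠ Finset.univ) :
    {i | i ∈ Finset.Icc 1 G.m ∧ ¬ G.fiber i ⊆ t}.Nonempty := by
  obtain ⟨u, hu⟩ : ∃ u, u ∉ t := by
    by_contra h
    push_neg at h
    exact htop (Finset.eq_univ_iff_forall.mpr h)
  exact ⟨G.chain u, hG.2.1 u, fun hsub => hu (hsub ((fiber_mem_iff G).mpr rfl))⟩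

lemma kIdx_mem (G : GridData P) (hG : G.IsGridPoset) {t : Finset P}
    (htop : t ≠ Finset.univ) :
    G.kIdx t ∈ {i | i ∈ Finset.Icc 1 G.m ∧ ¬ G.fiber i ⊆ t} :=
  Nat.sSup_mem (K_nonempty' G hG htop) (bddAbove_K G t)

end Aux

/-- If `P` has the max property, `t ≠ max`, `γ = κ(t)`, and `s ∈ comp_γ(t)` with
`v(t) ∉ s` (so that `s ≠ max`), then `κ(s) = γ`. -/
theorem stmt_17 {P : Type} [PartialOrder P] [Fintype P] [Nonempty P] (G : GridData P)
    (hG : G.IsTwoColorGridPoset) (hmax : G.MaxProperty)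
    (t : Finset P) (ht : IsIdeal t) (htop : t ≠ Finset.univ)
    (γ : Fin 2) (hγ : γ = G.kOf t)
    (s : Finset P) (hs : s ∈ G.comp γ t) (hv : G.vOf t ∉ s) :
    G.kOf s = γ := by
  obtain ⟨hGrid, hColorConst, -⟩ := hG
  set k := G.kIdx t with hk
  have hkmem := kIdx_mem G hGrid htop
  have hkIcc : k ∈ Finset.Icc 1 G.m := hkmem.1
  have hfk : ¬ G.fiber k ⊆ t := hkmem.2
  have hfkne : (G.fiber k).Nonempty := by
    obtain ⟨x, hx, -⟩ := Finset.not_subset.mp hfk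
    exact ⟨x, hx⟩
  obtain ⟨hzk, -⟩ := zEl_mem G hGrid hfkne
  -- v(t) = zEl k ∉ s, so fiber k ⊄ s
  have hfks : ¬ G.fiber k ⊆ s := fun hsub => hv (hsub hzk)
  have hstop : s ≠ Finset.univ := by
    intro h
    exact hfks (h ▸ Finset.subset_univ _)
  have hk'mem := kIdx_mem G hGrid hstop
  set k' := G.kIdx s with hk'
  have hkk' : k ≤ k' := le_csSup (bddAbove_K G s) ⟨hkIcc, hfks⟩
  have hfk'ne : (G.fiber k').Nonempty := by
    obtain ⟨x, hx, -⟩ := Finset.not_subset.mp hk'mem.2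
    exact ⟨x, hx⟩
  obtain ⟨hzk', -⟩ := zEl_mem G hGrid hfk'ne
  rcases eq_or_lt_of_le hkk' with heq | hlt
  · -- k' = k : same vertex
    rw [GridData.kOf, GridData.vOf, ← hk', ← heq, hγ]
    rfl
  · -- k < k' : the fiber k' is contained in t but not in s
    have hk'nott : G.fiber k' ⊆ t := by
      by_contra hn
      have : k' ≤ k := le_csSup (bddAbove_K G t) ⟨hk'mem.1, hn⟩
      omega
    obtain ⟨u, hu, hus⟩ := Finset.not_subset.mp hk'mem.2
    have hut : u ∈ t := hk'nott hu
    have hcu : G.color u = γ := by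
      by_contra hne
      exact hus ((comp_mem_iff_of_ne_color G γ hs hne).mp hut)
    have : G.color (G.zEl k') = G.color u := by
      apply hColorConst
      rw [(fiber_mem_iff G).mp hzk', (fiber_mem_iff G).mp hu]
    rw [GridData.kOf, GridData.vOf, ← hk', this, hcu]
end

section
/- Let P be a grid poset and let t be a proper order ideal of P (so t ≠ P). Let k be the largest index in {1,…,m} such that C_k ⊈ t. Then z_k ∉ t, and t ∪ C_k is an order ideal of P. -/
open scoped Classical

theorem chain_le_of_le' {P : Type} [PartialOrder P] [Fintype P] (G : GridData P)
    (hG : G.IsGridPoset) : ∀ x y : P, y ≤ x → G.chain x ≤ G.chain y := by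
  intro x
  induction x using WellFoundedLT.induction with
  | ind x IH =>
    intro y hyx
    rcases eq_or_lt_of_le hyx with rfl | hlt
    · exact le_rfl
    · obtain ⟨z, hzmem, hmax⟩ : ∃ m ∈ (Finset.univ.filter fun z => y ≤ z ∧ z < x),
          ∀ w ∈ (Finset.univ.filter fun z => y ≤ z ∧ z < x), ¬ m < w := by
        obtain ⟨i, hi⟩ := Finset.exists_maximal
          (s := Finset.univ.filter fun z => y ≤ z ∧ z < x) ⟨y, by simp [hlt]⟩
        exact ⟨i, hi.1, fun w hw hlt' => lt_irrefl _ (hlt'.trans_le (hi.2 hw hlt'.le))⟩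
      simp only [Finset.mem_filter, Finset.mem_univ, true_and] at hzmem
      have hcov : z ⋖ x := by
        refine ⟨hzmem.2, fun w hzw hwx => ?_⟩
        exact hmax w (by simp [hzmem.1.trans hzw.le, hwx]) hzw
      have h1 : G.chain x ≤ G.chain z := by
        rcases hG.2.2.2.2 z x hcov with h | h <;> omega
      exact h1.trans (IH z hzmem.2 y hzmem.1)

/-- For a proper order ideal `t` of a grid poset, if `k` is the largest index with
`C_k ⊄ t`, then `z_k ∉ t` and `t ∪ C_k` is an order ideal. -/
theorem stmt_18 {P : Type} [PartialOrder P] [Fintype P] [Nonempty P] (G : GridData P)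
    (hG : G.IsGridPoset)
    (t : Finset P) (ht : IsIdeal t) (htop : t ≠ Finset.univ) :
    G.vOf t ∉ t ∧ IsIdeal (t ∪ G.fiber (G.kIdx t)) := by
  classical
  obtain ⟨hm, hchain, hsurj, hcomp, hcov⟩ := hG
  set S := {i | i ∈ Finset.Icc 1 G.m ∧ ¬ G.fiber i ⊆ t} with hSdef
  have hne : S.Nonempty := by
    obtain ⟨u, hu⟩ : ∃ u, u ∉ t := by
      by_contra h; push_neg at h; exact htop (Finset.eq_univ_iff_forall.2 h)
    exact ⟨G.chain u, hchain u, fun hsub => hu (hsub (by simp [GridData.fiber]))⟩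
  have hbdd : BddAbove S := ⟨G.m, fun i hi => (Finset.mem_Icc.1 hi.1).2⟩
  have hkmem : G.kIdx t ∈ S := Nat.sSup_mem hne hbdd
  have hkub : ∀ i ∈ S, i ≤ G.kIdx t := fun i hi => le_csSup hbdd hi
  set k := G.kIdx t with hk
  have hfne : (G.fiber k).Nonempty := by
    obtain ⟨u, hu⟩ := hsurj k hkmem.1
    exact ⟨u, by simp [GridData.fiber, hu]⟩
  have hz : ∃ z ∈ G.fiber k, ∀ w ∈ G.fiber k, w ≤ z := by
    obtain ⟨z, hzmem, hmax⟩ : ∃ m ∈ G.fiber k, ∀ w ∈ G.fiber k, ¬ m < w := by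
      obtain ⟨i, hi⟩ := Finset.exists_maximal hfne
      exact ⟨i, hi.1, fun w hw hlt' => lt_irrefl _ (hlt'.trans_le (hi.2 hw hlt'.le))⟩
    refine ⟨z, hzmem, fun w hw => ?_⟩
    have hcw : G.chain w = G.chain z := by
      simp only [GridData.fiber, Finset.mem_filter] at hw hzmem
      rw [hw.2, hzmem.2]
    rcases hcomp w z hcw with h | h
    · exact h
    · rcases h.lt_or_eq with h' | rfl
      · exact absurd h' (hmax w hw)
      · exact le_rfl
  have hv : G.vOf t = hz.choose := by
    show G.zEl k = hz.choose
    rw [GridData.zEl, dif_pos hz]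
  obtain ⟨hzmem, hzmax⟩ := hz.choose_spec
  constructor
  · rw [hv]
    intro hmem
    exact hkmem.2 (fun w hw => ht hmem (hzmax w hw))
  · intro x hx y hyx
    rcases Finset.mem_union.1 hx with hx | hx
    · exact Finset.mem_union_left _ (ht hx hyx)
    · have hcx : G.chain x = k := by
        simpa [GridData.fiber] using hx
      have hky : k ≤ G.chain y := by
        rw [← hcx]
        exact chain_le_of_le' G ⟨hm, hchain, hsurj, hcomp, hcov⟩ x y hyx
      rcases hky.lt_or_eq with hlt | heq
      · have hnS : G.chain y ∉ S := fun h => absurd (hkub _ h) (by omega)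
        rw [hSdef] at hnS
        simp only [Set.mem_setOf_eq, hchain y, true_and, not_not] at hnS
        exact Finset.mem_union_left _ (hnS (by simp [GridData.fiber]))
      · exact Finset.mem_union_right _ (by simp [GridData.fiber, heq.symm])
end
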